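/- Let A : [t₀,∞) → (ℝⁿ →L[ℝ] ℝⁿ) and g : [t₀,∞) → ℝⁿ be continuous, and let x : [t₀,∞) → ℝⁿ be differentiable with x'(t) = A(t) x(t) + g(t) for all t ≥ t₀. Then for all t ≥ t₀, ‖x(t)‖ ≤ ‖x(t₀)‖ · exp(∫_{t₀}^{t} μ(A(s)) ds) + ∫_{t₀}^{t} exp(∫_{τ}^{t} μ(A(s)) ds) ‖g(τ)‖ dτ, where μ(B) = sup_{‖v‖=1} ⟪B v, v⟫ is the Euclidean logarithmic norm. -/

import Mathlib

open Filter Topology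
open scoped RealInnerProductSpace

/-- The Euclidean logarithmic norm of an operator `B : ℝⁿ →L[ℝ] ℝⁿ`,
`μ(B) = sup_{‖v‖=1} ⟪Bv, v⟫`. -/
noncomputable def logNorm {n : ℕ}
    (B : EuclideanSpace ℝ (Fin n) →L[ℝ] EuclideanSpace ℝ (Fin n)) : ℝ :=
  ⨆ v : {v : EuclideanSpace ℝ (Fin n) // ‖v‖ = 1}, ⟪B v.1, v.1⟫

lemma logNorm_bddAbove {n : ℕ}
    (B : EuclideanSpace ℝ (Fin n) →L[ℝ] EuclideanSpace ℝ (Fin n)) :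
    BddAbove (Set.range fun v : {v : EuclideanSpace ℝ (Fin n) // ‖v‖ = 1} => ⟪B v.1, v.1⟫) := by
  refine ⟨‖B‖, ?_⟩
  rintro _ ⟨⟨v, hv⟩, rfl⟩
  calc ⟪B v, v⟫ ≤ ‖B v‖ * ‖v‖ := real_inner_le_norm _ _
    _ ≤ ‖B‖ * ‖v‖ * ‖v‖ :=
        mul_le_mul_of_nonneg_right (B.le_opNorm v) (norm_nonneg v)
    _ = ‖B‖ := by rw [hv]; ring

lemma inner_le_logNorm {n : ℕ}
    (B : EuclideanSpace ℝ (Fin n) →L[ℝ] EuclideanSpace ℝ (Fin n))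
    (v : EuclideanSpace ℝ (Fin n)) : ⟪B v, v⟫ ≤ logNorm B * ‖v‖ ^ 2 := by
  rcases eq_or_ne v 0 with rfl | hv
  · simp
  · have hvn : (0 : ℝ) < ‖v‖ := norm_pos_iff.2 hv
    have hu : ‖(‖v‖⁻¹ • v : EuclideanSpace ℝ (Fin n))‖ = 1 := by
      rw [norm_smul, norm_inv, norm_norm, inv_mul_cancel₀ hvn.ne']
    have h1 : ⟪B ((‖v‖⁻¹ : ℝ) • v), (‖v‖⁻¹ : ℝ) • v⟫ ≤ logNorm B :=
      le_ciSup (logNorm_bddAbove B) ⟨_, hu⟩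
    rw [map_smul, real_inner_smul_left, real_inner_smul_right] at h1
    have h2 := mul_le_mul_of_nonneg_right h1 (sq_nonneg ‖v‖)
    calc ⟪B v, v⟫ = (‖v‖⁻¹ * ‖v‖) * ((‖v‖⁻¹ * ‖v‖) * ⟪B v, v⟫) := by
          rw [inv_mul_cancel₀ hvn.ne']; ring
      _ = ‖v‖⁻¹ * (‖v‖⁻¹ * ⟪B v, v⟫) * ‖v‖ ^ 2 := by ring
      _ ≤ logNorm B * ‖v‖ ^ 2 := h2

lemma logNorm_le_add {n : ℕ}
    (B C : EuclideanSpace ℝ (Fin n) →L[ℝ] EuclideanSpace ℝ (Fin n)) :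
    logNorm B ≤ logNorm C + ‖B - C‖ := by
  rcases isEmpty_or_nonempty {v : EuclideanSpace ℝ (Fin n) // ‖v‖ = 1} with h | h
  · rw [logNorm, logNorm, Real.iSup_of_isEmpty, Real.iSup_of_isEmpty]
    positivity
  · refine ciSup_le fun v => ?_
    have h1 : ⟪C v.1, v.1⟫ ≤ logNorm C := le_ciSup (logNorm_bddAbove C) v
    have h2 : ⟪(B - C) v.1, v.1⟫ ≤ ‖B - C‖ := by
      calc ⟪(B - C) v.1, v.1⟫ ≤ ‖(B - C) v.1‖ * ‖v.1‖ := real_inner_le_norm _ _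
        _ ≤ ‖B - C‖ * ‖v.1‖ * ‖v.1‖ :=
            mul_le_mul_of_nonneg_right ((B - C).le_opNorm v.1) (norm_nonneg _)
        _ = ‖B - C‖ := by rw [v.2]; ring
    have h3 : ⟪B v.1, v.1⟫ = ⟪C v.1, v.1⟫ + ⟪(B - C) v.1, v.1⟫ := by
      rw [ContinuousLinearMap.sub_apply, inner_sub_left]; ring
    rw [h3]; exact add_le_add h1 h2

lemma logNorm_lipschitz {n : ℕ} :
    LipschitzWith 1 (logNorm (n := n)) := by
  refine LipschitzWith.of_dist_le_mul fun B C => ?_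
  rw [Real.dist_eq, NNReal.coe_one, one_mul, dist_eq_norm, abs_sub_le_iff]
  constructor
  · have := logNorm_le_add B C; linarith
  · have := logNorm_le_add C B; rw [norm_sub_rev] at this; linarith

/-- variation-of-constants estimate. A solution of
`ẋ = A(t)x + g(t)` satisfies
`‖x(t)‖ ≤ ‖x(t₀)‖·exp(∫_{t₀}^t μ(A)) + ∫_{t₀}^t exp(∫_τ^t μ(A)) ‖g(τ)‖ dτ`. -/
theorem variation_of_constants_estimate {n : ℕ} (t₀ : ℝ)
    (A : ℝ → EuclideanSpace ℝ (Fin n) →L[ℝ] EuclideanSpace ℝ (Fin n))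
    (g : ℝ → EuclideanSpace ℝ (Fin n))
    (hA : ContinuousOn A (Set.Ici t₀)) (hg : ContinuousOn g (Set.Ici t₀))
    (x : ℝ → EuclideanSpace ℝ (Fin n))
    (hx : ∀ t, t₀ ≤ t → HasDerivAt x (A t (x t) + g t) t) :
    ∀ t, t₀ ≤ t →
      ‖x t‖ ≤ ‖x t₀‖ * Real.exp (∫ s in t₀..t, logNorm (A s)) +
        ∫ τ in t₀..t, Real.exp (∫ s in τ..t, logNorm (A s)) * ‖g τ‖ := by
  classical
  intro t₁ ht₁
  -- continuous extensions of `A` and `g` to all of `ℝ`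
  set Ab : ℝ → EuclideanSpace ℝ (Fin n) →L[ℝ] EuclideanSpace ℝ (Fin n) :=
    fun s => A (max s t₀) with hAb_def
  set gb : ℝ → EuclideanSpace ℝ (Fin n) := fun s => g (max s t₀) with hgb_def
  have hAb : Continuous Ab :=
    hA.comp_continuous (continuous_id.max continuous_const) fun s => Set.mem_Ici.2 (le_max_right _ _)
  have hgb : Continuous gb :=
    hg.comp_continuous (continuous_id.max continuous_const) fun s => Set.mem_Ici.2 (le_max_right _ _)
  have hgb_eq : ∀ s, t₀ ≤ s → gb s = g s := fun s hs => by
    simp [hgb_def, max_eq_left hs]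
  set L : ℝ → ℝ := fun s => logNorm (Ab s) with hL_def
  have hL : Continuous L := logNorm_lipschitz.continuous.comp hAb
  have hL_eq : ∀ s, t₀ ≤ s → L s = logNorm (A s) := fun s hs => by
    simp [hL_def, hAb_def, max_eq_left hs]
  set E : ℝ → ℝ := fun t => Real.exp (∫ s in t₀..t, L s) with hE_def
  have hEpos : ∀ t, 0 < E t := fun t => Real.exp_pos _
  have hE : ∀ t, HasDerivAt E (L t * E t) t := by
    intro t
    have h1 : HasDerivAt (fun u => ∫ s in t₀..u, L s) (L t) t :=
      intervalIntegral.integral_hasDerivAt_right (hL.intervalIntegrable _ _)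
        (hL.stronglyMeasurable.stronglyMeasurableAtFilter) hL.continuousAt
    simpa [hE_def, mul_comm] using h1.exp
  have hEc : Continuous E := continuous_iff_continuousAt.2 fun t => (hE t).continuousAt
  set I : ℝ → ℝ := fun t => ∫ τ in t₀..t, ‖gb τ‖ / E τ with hI_def
  set J : ℝ → ℝ := fun t => ∫ τ in t₀..t, (E τ)⁻¹ with hJ_def
  have hIc : Continuous fun τ => ‖gb τ‖ / E τ :=
    hgb.norm.div hEc fun τ => (hEpos τ).ne'
  have hJc : Continuous fun τ => (E τ)⁻¹ := hEc.inv₀ fun τ => (hEpos τ).ne'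
  have hI : ∀ t, HasDerivAt I (‖gb t‖ / E t) t := fun t =>
    intervalIntegral.integral_hasDerivAt_right (hIc.intervalIntegrable _ _)
      (hIc.stronglyMeasurable.stronglyMeasurableAtFilter) hIc.continuousAt
  have hJ : ∀ t, HasDerivAt J ((E t)⁻¹) t := fun t =>
    intervalIntegral.integral_hasDerivAt_right (hJc.intervalIntegrable _ _)
      (hJc.stronglyMeasurable.stronglyMeasurableAtFilter) hJc.continuousAt
  -- main estimate with a positive margin ε
  have main : ∀ ε : ℝ, 0 < ε →
      ‖x t₁‖ ≤ ‖x t₀‖ * E t₁ + E t₁ * I t₁ + ε * (E t₁ * J t₁) := by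
    intro ε hε
    set Bf : ℝ → ℝ := fun t => ‖x t₀‖ * E t + E t * (I t + ε * J t) with hBf_def
    have hB' : ∀ t, HasDerivAt Bf (L t * Bf t + (‖gb t‖ + ε)) t := by
      intro t
      have h1 := ((hE t).const_mul ‖x t₀‖).add
        ((hE t).mul ((hI t).add ((hJ t).const_mul ε)))
      convert h1 using 1
      · rfl
      · rfl
      · rfl
      have hne : E t ≠ 0 := (hEpos t).ne'
      field_simp [hBf_def]
      show L t * (‖x t₀‖ * E t + E t * (I t + ε * J t)) + (‖gb t‖ + ε) = _
      simp only [Pi.add_apply]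
      ring
    have key : ∀ s ∈ Set.Icc t₀ t₁, ‖x s‖ ≤ Bf s := by
      apply image_le_of_liminf_slope_right_lt_deriv_boundary
        (f := fun s => ‖x s‖)
        (f' := fun s => if x s = 0 then ‖g s‖ else ⟪A s (x s) + g s, x s⟫ / ‖x s‖)
        (B := Bf) (B' := fun t => L t * Bf t + (‖gb t‖ + ε))
      · exact fun s hs => ((hx s hs.1).continuousAt.continuousWithinAt).norm
      · intro t ht r hr
        by_cases hxt : x t = 0
        · simp only [if_pos hxt] at hr
          have hr' : ‖A t (x t) + g t‖ < r := by rwa [hxt, map_zero, zero_add]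
          have h2 := ((hx t ht.1).hasDerivWithinAt (s := Set.Ici t)).liminf_right_slope_norm_le hr'
          refine h2.mono fun z hz => ?_
          rwa [slope_def_field, div_eq_inv_mul]
        · simp only [if_neg hxt] at hr
          have hpos : (0 : ℝ) < ‖x t‖ := norm_pos_iff.2 hxt
          have hq : ⟪x t, x t⟫ ≠ 0 := by
            rw [real_inner_self_eq_norm_mul_norm]; positivity
          have h1 : HasDerivAt (fun s => ⟪x s, x s⟫)
              (⟪x t, A t (x t) + g t⟫ + ⟪A t (x t) + g t, x t⟫) t :=
            (hx t ht.1).inner ℝ (hx t ht.1)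
          have h2 := (Real.hasDerivAt_sqrt hq).comp t h1
          have hfun : (fun s => Real.sqrt ⟪x s, x s⟫) = fun s => ‖x s‖ := by
            funext s
            rw [real_inner_self_eq_norm_mul_norm, Real.sqrt_mul_self (norm_nonneg _)]
          have hsq : Real.sqrt ⟪x t, x t⟫ = ‖x t‖ := by
            rw [real_inner_self_eq_norm_mul_norm, Real.sqrt_mul_self (norm_nonneg _)]
          have hval : 1 / (2 * Real.sqrt ⟪x t, x t⟫) *
              (⟪x t, A t (x t) + g t⟫ + ⟪A t (x t) + g t, x t⟫)
              = ⟪A t (x t) + g t, x t⟫ / ‖x t‖ := by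
            rw [hsq, real_inner_comm (x t)]
            field_simp
            ring
          have h3 : HasDerivAt (fun s => ‖x s‖)
              (⟪A t (x t) + g t, x t⟫ / ‖x t‖) t := by
            rw [← hfun, ← hval]
            exact h2
          exact h3.hasDerivWithinAt.liminf_right_slope_le hr
      · simp [hBf_def, hE_def, hI_def, hJ_def, intervalIntegral.integral_same]
      · exact hB'
      · intro t ht heq
        by_cases hxt : x t = 0
        · simp only [if_pos hxt]
          rw [← heq, hxt, norm_zero, mul_zero, zero_add]
          rw [hgb_eq t ht.1]
          linarith
        · simp only [if_neg hxt]
          have hpos : (0 : ℝ) < ‖x t‖ := norm_pos_iff.2 hxt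
          have hinner : ⟪A t (x t), x t⟫ ≤ L t * ‖x t‖ ^ 2 := by
            rw [hL_eq t ht.1]; exact inner_le_logNorm (A t) (x t)
          have hg2 : ⟪g t, x t⟫ ≤ ‖g t‖ * ‖x t‖ := real_inner_le_norm _ _
          have hsum : ⟪A t (x t) + g t, x t⟫ ≤ (L t * ‖x t‖ + ‖g t‖) * ‖x t‖ := by
            rw [inner_add_left]; nlinarith [sq_nonneg ‖x t‖]
          have hdiv : ⟪A t (x t) + g t, x t⟫ / ‖x t‖ ≤ L t * ‖x t‖ + ‖g t‖ :=
            (div_le_iff₀ hpos).2 hsum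
          rw [← heq, hgb_eq t ht.1]
          linarith
    have := key t₁ ⟨ht₁, le_refl t₁⟩
    calc ‖x t₁‖ ≤ Bf t₁ := this
      _ = ‖x t₀‖ * E t₁ + E t₁ * I t₁ + ε * (E t₁ * J t₁) := by
        rw [hBf_def]; ring
  -- rewrite the right-hand side of the goal
  have hE₁ : Real.exp (∫ s in t₀..t₁, logNorm (A s)) = E t₁ := by
    rw [hE_def]
    congr 1
    refine intervalIntegral.integral_congr fun s hs => ?_
    rw [Set.uIcc_of_le ht₁] at hs
    exact (hL_eq s hs.1).symm
  have hInt : (∫ τ in t₀..t₁, Real.exp (∫ s in τ..t₁, logNorm (A s)) * ‖g τ‖)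
      = E t₁ * I t₁ := by
    rw [hI_def, ← intervalIntegral.integral_const_mul]
    refine intervalIntegral.integral_congr fun τ hτ => ?_
    rw [Set.uIcc_of_le ht₁] at hτ
    have e1 : (∫ s in τ..t₁, logNorm (A s)) = ∫ s in τ..t₁, L s := by
      refine intervalIntegral.integral_congr fun s hs => ?_
      rw [Set.uIcc_of_le hτ.2] at hs
      exact (hL_eq s (hτ.1.trans hs.1)).symm
    have e2 : (∫ s in τ..t₁, L s) = (∫ s in t₀..t₁, L s) - ∫ s in t₀..τ, L s :=
      (intervalIntegral.integral_interval_sub_left (hL.intervalIntegrable _ _)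
        (hL.intervalIntegrable _ _)).symm
    rw [e1, e2, Real.exp_sub, hgb_eq τ hτ.1]
    rw [hE_def]
    field_simp
  rw [hE₁, hInt]
  -- let ε → 0
  have hCnn : 0 ≤ E t₁ * J t₁ := by
    have hJnn : 0 ≤ J t₁ := by
      rw [hJ_def]
      exact intervalIntegral.integral_nonneg ht₁ fun τ _ => le_of_lt (by positivity)
    positivity
  refine le_of_forall_pos_le_add fun ε' hε' => ?_
  set C := E t₁ * J t₁ with hC_def
  have hεp : 0 < ε' / (C + 1) := by positivity
  have h1 := main _ hεp
  have h2 : ε' / (C + 1) * C ≤ ε' := by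
    rw [div_mul_eq_mul_div, div_le_iff₀ (by linarith)]
    nlinarith
  linarith
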